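/- Let d ≥ 1 and m ≤ n be positive integers, let v ∈ ℤ^d have every entry coprime to m, let δ ∈ ℤ^d, and let l = (l₁,…,l_d) with each l_k ∈ {0, 1/n, 2/n, …, (n−m)/n}. Then R(n,m,v,δ) ∩ Π_{k=1}^d [l_k, l_k + m/n] is an m-point Latin hypercube design in the hypercube Π_{k=1}^d [l_k, l_k + m/n]: it contains exactly m points, and for every coordinate k ∈ {1,…,d} the map sending a point of this intersection to its k-th coordinate is a bijection onto { l_k + (2t+1)/(2n) : t = 0, 1, …, m−1 }. -/

import Mathlib

open Finset

/-- Distance from a real number to the nearest integer: w(t) = min over z in ZZ of |t - z|. -/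
noncomputable def nid (t : ℝ) : ℝ := ⨅ z : ℤ, |t - (z : ℝ)|

/-- Wrap-around distance on ℝ^d. -/
noncomputable def wdist {d : ℕ} (u : Fin d → ℝ) : ℝ := Real.sqrt (∑ k, nid (u k) ^ 2)

/-- Lattice-based Latin hypercube design
L(n,v,δ) = { z + i·v/n + δ/n + 1_d/(2n) : z ∈ ℤ^d, i ∈ ℤ } ∩ [0,1]^d. -/
def LHDset (d n : ℕ) (v : Fin d → ℤ) (δ : Fin d → ℝ) : Set (Fin d → ℝ) :=
  {x | (∃ (z : Fin d → ℤ) (i : ℤ),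
          x = fun k => (z k : ℝ) + (i : ℝ) * (v k : ℝ) / n + δ k / n + 1 / (2 * n)) ∧
       ∀ k, x k ∈ Set.Icc (0 : ℝ) 1}

/-- Regularly repeated lattice-based Latin hypercube design
R(n,m,v,δ) = { (m/n)·z + i·v/n + δ/n + 1_d/(2n) : z ∈ ℤ^d, i ∈ ℤ } ∩ [0,1]^d. -/
def RLHDset (d n m : ℕ) (v δ : Fin d → ℤ) : Set (Fin d → ℝ) :=
  {x | (∃ (z : Fin d → ℤ) (i : ℤ),
          x = fun k => (m : ℝ) * (z k : ℝ) / n + (i : ℝ) * (v k : ℝ) / n + (δ k : ℝ) / n + 1 / (2 * n)) ∧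
       ∀ k, x k ∈ Set.Icc (0 : ℝ) 1}

namespace Stmt17Aux

variable {d : ℕ}

/-- residue: t i k = (i·v_k + δ_k − a_k) mod m -/
def tI (m : ℕ) (v δ : Fin d → ℤ) (a : Fin d → ℕ) (i : ℤ) (k : Fin d) : ℤ :=
  (i * v k + δ k - (a k : ℤ)) % (m : ℤ)

noncomputable def Fpt (n m : ℕ) (v δ : Fin d → ℤ) (a : Fin d → ℕ) (i : ℤ) : Fin d → ℝ :=
  fun k => (((a k : ℤ) + tI m v δ a i k : ℤ) : ℝ) / n + 1 / (2 * n)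

variable {n m : ℕ} {v δ : Fin d → ℤ} {a : Fin d → ℕ}

lemma tI_nonneg (hm : 1 ≤ m) (i : ℤ) (k : Fin d) : 0 ≤ tI m v δ a i k :=
  Int.emod_nonneg _ (by exact_mod_cast Nat.one_le_iff_ne_zero.mp hm)

lemma tI_lt (hm : 1 ≤ m) (i : ℤ) (k : Fin d) : tI m v δ a i k < m :=
  Int.emod_lt_of_pos _ (by exact_mod_cast hm)

lemma tI_eq_of_dvd (hij : (m : ℤ) ∣ i - j) (k : Fin d) :
    tI m v δ a i k = tI m v δ a j k := by
  unfold tI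
  rw [Int.emod_eq_emod_iff_emod_sub_eq_zero]
  have : (i * v k + δ k - a k) - (j * v k + δ k - a k) = (i - j) * v k := by ring
  rw [this]
  exact Int.emod_eq_zero_of_dvd (Dvd.dvd.mul_right hij _)

lemma dvd_of_tI_eq (hco : IsCoprime (v k) (m : ℤ))
    (h : tI m v δ a i k = tI m v δ a j k) : (m : ℤ) ∣ i - j := by
  unfold tI at h
  rw [Int.emod_eq_emod_iff_emod_sub_eq_zero] at h
  have h2 : (m : ℤ) ∣ (i - j) * v k := by
    have : (i * v k + δ k - a k) - (j * v k + δ k - a k) = (i - j) * v k := by ring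
    rw [this] at h
    exact Int.dvd_of_emod_eq_zero h
  exact (hco.symm).dvd_of_dvd_mul_right h2

/-- Fpt i is in the design and the box. -/
lemma Fpt_mem (hm : 1 ≤ m) (hmn : m ≤ n) (ha : ∀ k, a k + m ≤ n) (i : ℤ) :
    Fpt n m v δ a i ∈ RLHDset d n m v δ ∩
      {x : Fin d → ℝ | ∀ k, x k ∈ Set.Icc ((a k : ℝ) / n) ((a k : ℝ) / n + (m : ℝ) / n)} := by
  have hn : 0 < n := lt_of_lt_of_le hm hmn
  have hnR : (0 : ℝ) < n := by exact_mod_cast hn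
  constructor
  · refine ⟨⟨fun k => -((i * v k + δ k - (a k : ℤ)) / m), i, ?_⟩, ?_⟩
    · funext k
      have key : (m : ℤ) * (-((i * v k + δ k - (a k : ℤ)) / m)) + i * v k + δ k
          = (a k : ℤ) + tI m v δ a i k := by
        have := Int.emod_add_mul_ediv (i * v k + δ k - (a k : ℤ)) (m : ℤ)
        unfold tI; linarith
      have keyR : (m : ℝ) * ((-((i * v k + δ k - (a k : ℤ)) / m) : ℤ) : ℝ) + (i:ℝ) * (v k : ℝ) + (δ k : ℝ)
          = (((a k : ℤ) + tI m v δ a i k : ℤ) : ℝ) := by exact_mod_cast congrArg (Int.cast : ℤ → ℝ) key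
      unfold Fpt
      rw [← add_div, ← add_div, keyR]
    · intro k
      have h0 := tI_nonneg (a := a) (v := v) (δ := δ) hm i k
      have h1 := tI_lt (a := a) (v := v) (δ := δ) hm i k
      have ha' : (a k : ℤ) + m ≤ n := by exact_mod_cast ha k
      have hlo : (0 : ℝ) ≤ (((a k : ℤ) + tI m v δ a i k : ℤ) : ℝ) := by
        have : (0:ℤ) ≤ (a k : ℤ) + tI m v δ a i k := by positivity
        exact_mod_cast this
      have hhi : (((a k : ℤ) + tI m v δ a i k : ℤ) : ℝ) ≤ (n : ℝ) - 1 := by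
        have : (a k : ℤ) + tI m v δ a i k ≤ (n : ℤ) - 1 := by omega
        exact_mod_cast this
      constructor
      · unfold Fpt; positivity
      · unfold Fpt
        rw [div_add_div _ _ hnR.ne' (by positivity), div_le_one (by positivity)]
        nlinarith
  · intro k
    have h0 := tI_nonneg (a := a) (v := v) (δ := δ) hm i k
    have h1 := tI_lt (a := a) (v := v) (δ := δ) hm i k
    have h0R : (0:ℝ) ≤ (tI m v δ a i k : ℝ) := by exact_mod_cast h0
    have h1R : (tI m v δ a i k : ℝ) ≤ (m:ℝ) - 1 := by
      have : tI m v δ a i k ≤ (m:ℤ) - 1 := by omega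
      exact_mod_cast this
    unfold Fpt
    push_cast
    constructor
    · have : (0:ℝ) ≤ (tI m v δ a i k : ℝ) / n + 1 / (2*n) := by positivity
      rw [add_div]; linarith
    · rw [add_div]
      have : (tI m v δ a i k : ℝ) / n + 1/(2*n) ≤ (m:ℝ)/n := by
        rw [div_add_div _ _ hnR.ne' (by positivity), div_le_div_iff₀ (by positivity) hnR]
        nlinarith [mul_pos hnR hnR]
      linarith

/-- every point of the intersection is some Fpt i -/
lemma mem_repr (hm : 1 ≤ m) (hmn : m ≤ n)
    (hx : x ∈ RLHDset d n m v δ ∩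
      {x : Fin d → ℝ | ∀ k, x k ∈ Set.Icc ((a k : ℝ) / n) ((a k : ℝ) / n + (m : ℝ) / n)}) :
    ∃ i : ℤ, x = Fpt n m v δ a i := by
  obtain ⟨⟨⟨z, i, rfl⟩, -⟩, hbox⟩ := hx
  refine ⟨i, ?_⟩
  have hn : 0 < n := lt_of_lt_of_le hm hmn
  have hnR : (0 : ℝ) < n := by exact_mod_cast hn
  funext k
  have hb := hbox k
  simp only [Set.mem_Icc] at hb
  set c : ℤ := (m:ℤ) * z k + i * v k + δ k - (a k : ℤ) with hc
  have hxk : (m : ℝ) * (z k : ℝ) / n + (i : ℝ) * (v k : ℝ) / n + (δ k : ℝ) / n + 1 / (2 * n)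
      = ((a k : ℝ) + (c : ℝ)) / n + 1/(2*n) := by
    rw [← add_div, ← add_div]
    congr 2
    push_cast [hc]; ring
  rw [hxk] at hb
  -- derive 0 ≤ c and c ≤ m - 1
  have hub : (c:ℝ)/n + 1/(2*n) ≤ (m:ℝ)/n := by
    have h2 := hb.2
    rw [add_div] at h2
    linarith
  have hlb : (0:ℝ) ≤ (c:ℝ)/n + 1/(2*n) := by
    have h1 := hb.1
    rw [add_div] at h1
    linarith
  rw [div_add_div _ _ hnR.ne' (by positivity), div_le_div_iff₀ (by positivity) hnR] at hub
  rw [div_add_div _ _ hnR.ne' (by positivity), le_div_iff₀ (by positivity)] at hlb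
  have hcub : 2*(c:ℝ) + 1 ≤ 2*(m:ℝ) := by nlinarith [mul_pos hnR hnR]
  have hclb : (0:ℝ) ≤ 2*(c:ℝ) + 1 := by nlinarith
  have hc0 : 0 ≤ c := by
    have : (-1 : ℝ) < (c : ℝ) := by linarith
    have : (-1 : ℤ) < c := by exact_mod_cast this
    omega
  have hcm : c < m := by
    have : (c : ℝ) < (m : ℝ) := by linarith
    exact_mod_cast this
  have ht : tI m v δ a i k = c := by
    unfold tI
    have h1 : i * v k + δ k - (a k : ℤ) = c + (m:ℤ) * (-(z k)) := by rw [hc]; ring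
    rw [h1, Int.add_mul_emod_self_left, Int.emod_eq_of_lt hc0 hcm]
  rw [hxk]
  unfold Fpt
  rw [ht]
  push_cast
  ring



lemma tI_eq_of_coord {i j : ℤ} {k : Fin d} (hn : 0 < n)
    (h : Fpt n m v δ a i k = Fpt n m v δ a j k) : tI m v δ a i k = tI m v δ a j k := by
  have hnR : (0:ℝ) < n := by exact_mod_cast hn
  unfold Fpt at h
  field_simp at h
  have h' : ((tI m v δ a i k : ℤ) : ℝ) = tI m v δ a j k := by push_cast at h; linarith
  exact_mod_cast h'

lemma Fpt_eq_of_dvd {i j : ℤ} (hij : (m : ℤ) ∣ i - j) :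
    Fpt n m v δ a i = Fpt (d := d) n m v δ a j := by
  funext k
  unfold Fpt
  rw [tI_eq_of_dvd hij k]

lemma Fpt_coord (hm : 1 ≤ m) (hmn : m ≤ n) (i : ℤ) (k : Fin d) :
    Fpt n m v δ a i k = (a k : ℝ) / n + (2 * ((tI m v δ a i k).toNat : ℝ) + 1) / (2 * n) := by
  have hn : 0 < n := lt_of_lt_of_le hm hmn
  have hnR : (0:ℝ) < n := by exact_mod_cast hn
  have h0 := tI_nonneg (a := a) (v := v) (δ := δ) hm i k
  unfold Fpt
  rw [div_add_div _ _ hnR.ne' (by positivity), div_add_div _ _ hnR.ne' (by positivity)]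
  congr 1
  have hcast : ((tI m v δ a i k).toNat : ℝ) = ((tI m v δ a i k : ℤ) : ℝ) := by
    exact_mod_cast congrArg (fun z : ℤ => (z : ℝ)) (Int.toNat_of_nonneg h0)
  push_cast
  rw [hcast]
  ring

end Stmt17Aux

open Stmt17Aux

/-- the portion of R(n,m,v,δ) inside the box Π_k [l_k, l_k + m/n] is an
m-point Latin hypercube design in that box. -/
theorem stmt_17 (d n m : ℕ) (hd : 1 ≤ d) (hm : 1 ≤ m) (hmn : m ≤ n) (v δ : Fin d → ℤ)
    (hco : ∀ k, IsCoprime (v k) (m : ℤ))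
    (l : Fin d → ℝ) (hl : ∀ k, ∃ a : ℕ, a ≤ n - m ∧ l k = (a : ℝ) / n) :
    (RLHDset d n m v δ ∩
        {x : Fin d → ℝ | ∀ k, x k ∈ Set.Icc (l k) (l k + (m : ℝ) / n)}).ncard = m ∧
    ∀ k : Fin d, Set.BijOn (fun x : Fin d → ℝ => x k)
      (RLHDset d n m v δ ∩ {x : Fin d → ℝ | ∀ k, x k ∈ Set.Icc (l k) (l k + (m : ℝ) / n)})
      {r : ℝ | ∃ t : ℕ, t < m ∧ r = l k + (2 * (t : ℝ) + 1) / (2 * n)} := by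
  choose a ha hla using hl
  have hn : 0 < n := lt_of_lt_of_le hm hmn
  have hnR : (0:ℝ) < n := by exact_mod_cast hn
  have hmZ : (0:ℤ) < m := by exact_mod_cast hm
  have ha' : ∀ k, a k + m ≤ n := fun k => by have := ha k; omega
  have hbS : {x : Fin d → ℝ | ∀ k, x k ∈ Set.Icc (l k) (l k + (m : ℝ) / n)} =
      {x : Fin d → ℝ | ∀ k, x k ∈ Set.Icc ((a k : ℝ)/n) ((a k : ℝ)/n + (m : ℝ)/n)} := by
    ext x; simp only [Set.mem_setOf_eq, hla]
  rw [hbS]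
  -- the common description of the design portion
  have hdvd_of_eq : ∀ i j : ℤ, Fpt n m v δ a i = Fpt n m v δ a j → (m:ℤ) ∣ i - j := by
    intro i j h
    exact dvd_of_tI_eq (hco ⟨0, hd⟩) (tI_eq_of_coord hn (congrFun h ⟨0, hd⟩))
  have hSim : RLHDset d n m v δ ∩
      {x : Fin d → ℝ | ∀ k, x k ∈ Set.Icc ((a k : ℝ)/n) ((a k : ℝ)/n + (m : ℝ)/n)} =
      Fpt n m v δ a '' ↑(Finset.Ico (0:ℤ) (m:ℤ)) := by
    ext x
    constructor
    · intro hx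
      obtain ⟨i, rfl⟩ := mem_repr hm hmn hx
      refine ⟨i % m, by simp [Int.emod_nonneg _ hmZ.ne', Int.emod_lt_of_pos _ hmZ], ?_⟩
      refine Fpt_eq_of_dvd ⟨-(i / m), ?_⟩
      have := Int.emod_add_mul_ediv i (m:ℤ)
      linarith
    · rintro ⟨i, -, rfl⟩
      exact Fpt_mem hm hmn ha' i
  have hinjOn : Set.InjOn (Fpt n m v δ a) ↑(Finset.Ico (0:ℤ) (m:ℤ)) := by
    intro i hi j hj h
    simp only [Finset.coe_Ico, Set.mem_Ico] at hi hj
    have hdvd := hdvd_of_eq i j h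
    have h0 := Int.emod_eq_emod_iff_emod_sub_eq_zero.mpr (Int.emod_eq_zero_of_dvd hdvd)
    rwa [Int.emod_eq_of_lt hi.1 hi.2, Int.emod_eq_of_lt hj.1 hj.2] at h0
  constructor
  · rw [hSim, Set.ncard_image_of_injOn hinjOn, Set.ncard_coe_finset, Int.card_Ico]
    simp
  · intro k
    refine ⟨?_, ?_, ?_⟩
    · -- MapsTo
      intro x hx
      obtain ⟨i, rfl⟩ := mem_repr hm hmn hx
      refine ⟨(tI m v δ a i k).toNat, ?_, ?_⟩
      · have := tI_lt (a := a) (v := v) (δ := δ) hm i k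
        have := tI_nonneg (a := a) (v := v) (δ := δ) hm i k
        omega
      · simp only [hla]
        exact Fpt_coord hm hmn i k
    · -- InjOn
      intro x hx y hy hxy
      obtain ⟨i, rfl⟩ := mem_repr hm hmn hx
      obtain ⟨j, rfl⟩ := mem_repr hm hmn hy
      exact Fpt_eq_of_dvd (dvd_of_tI_eq (hco k) (tI_eq_of_coord hn hxy))
    · -- SurjOn
      rintro r ⟨t, htm, rfl⟩
      obtain ⟨u, w, huv⟩ := hco k
      set i : ℤ := ((t:ℤ) + (a k : ℤ) - δ k) * u with hi
      have htI : tI m v δ a i k = (t:ℤ) := by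
        have hrepr : i * v k + δ k - (a k : ℤ)
            = (t:ℤ) + (m:ℤ) * (-(((t:ℤ) + (a k : ℤ) - δ k) * w)) := by
          linear_combination ((t:ℤ) + (a k : ℤ) - δ k) * huv
        unfold tI
        rw [hrepr, Int.add_mul_emod_self_left,
          Int.emod_eq_of_lt (Int.ofNat_nonneg t) (by exact_mod_cast htm)]
      refine ⟨Fpt n m v δ a i, Fpt_mem hm hmn ha' i, ?_⟩
      simp only [hla]
      rw [Fpt_coord hm hmn i k, htI]
      norm_num
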